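/- arXiv:2202.03780 — 4 statements merged into one kernel-verified Lean document; each statement's English description precedes it below -/
import Mathlib

section
/- Let T be a compact irreducible positive operator on a Banach lattice E with principal eigenvector u (so Tu = spr(T)·u, u > 0, ‖u‖ = 1, spr(T) > 0), and let φ > 0 be a positive eigenfunctional of the adjoint with T'φ = spr(T)·φ. If u is a quasi-interior point, then φ is strictly positive, i.e., v ≥ 0 and ⟨v, φ⟩ = 0 imply v = 0. -/
open Filter

/-- If `T` is compact, positive, irreducible with principal eigenvector `u`
(a quasi-interior point) and `φ > 0` is a positive eigenfunctional of the
adjoint for the spectral radius, then `φ` is strictly positive. -/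
theorem stmt_5 {E : Type*} [NormedAddCommGroup E] [Lattice E] [HasSolidNorm E]
    [IsOrderedAddMonoid E] [NormedSpace ℝ E]
    [CompleteSpace E]
    (T : E →L[ℝ] E)
    (hT : ∀ f : E, 0 ≤ f → 0 ≤ T f)
    (hcomp : IsCompactOperator T)
    (hirr : ∀ v : E, 0 < v → ∀ ψ : E →L[ℝ] ℝ, (∀ f : E, 0 ≤ f → 0 ≤ ψ f) → ψ ≠ 0 →
      ∃ n : ℕ, 0 < ψ ((T ^ n) v))
    (r : ℝ) (hr : 0 < r) (hspr : spectralRadius ℝ T = ENNReal.ofReal r)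
    (u : E) (hu : 0 < u) (hun : ‖u‖ = 1) (hueig : T u = r • u)
    (hqi : ∀ f : E, 0 ≤ f → Tendsto (fun n : ℕ => f ⊓ (n • u)) atTop (nhds f))
    (φ : E →L[ℝ] ℝ) (hφpos : ∀ f : E, 0 ≤ f → 0 ≤ φ f) (hφ0 : φ ≠ 0)
    (hφeig : ∀ x : E, φ (T x) = r * φ x) :
    ∀ v : E, 0 ≤ v → φ v = 0 → v = 0 := by
  intro v hv hφv
  by_contra hne
  have hvpos : 0 < v := lt_of_le_of_ne hv (Ne.symm hne)
  obtain ⟨n, hn⟩ := hirr v hvpos φ hφpos hφ0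
  have key : ∀ m : ℕ, φ ((T ^ m) v) = r ^ m * φ v := by
    intro m
    induction m with
    | zero => simp
    | succ k ih =>
      have : (T ^ (k + 1)) v = T ((T ^ k) v) := by
        rw [pow_succ']; rfl
      rw [this, hφeig, ih, pow_succ]; ring
  rw [key n, hφv, mul_zero] at hn
  exact lt_irrefl 0 hn
end

section
/- Let E = L^p(Ω), 1 ≤ p < ∞, let -A generate a C₀-semigroup with compact resolvent R = (ωI + A + m)^{-1} at some point ω in the resolvent set, and suppose m_n → m weak* in L^∞(Ω) with the resolvents R_n = (ωI + A + m_n)^{-1} uniformly bounded in operator norm. Then ‖R C_n R‖ → 0, where C_n is multiplication by m_n − m, and consequently R_n → R in operator norm. -/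
open MeasureTheory Filter

open Filter Set

open scoped ENNReal NNReal


section Aux

variable {α : Type*} [MeasurableSpace α] {μ : MeasureTheory.Measure α} {p : ℝ≥0∞}

lemma aux_p_ne_zero [Fact (1 ≤ p)] : p ≠ 0 :=
  (lt_of_lt_of_le zero_lt_one (Fact.out : 1 ≤ p)).ne'

lemma aux_norm_le [Fact (1 ≤ p)] {v u : Lp ℝ p μ} {B : ℝ} (hB : 0 ≤ B)
    (h : ∀ᵐ x ∂μ, |(v : α → ℝ) x| ≤ B * |(u : α → ℝ) x|) : ‖v‖ ≤ B * ‖u‖ := by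
  have h1 : eLpNorm (v : α → ℝ) p μ ≤ eLpNorm (B • (u : α → ℝ)) p μ := by
    refine eLpNorm_mono_ae (h.mono fun x hx => ?_)
    simpa [Real.norm_eq_abs, abs_mul, abs_of_nonneg hB] using hx
  rw [eLpNorm_const_smul] at h1
  rw [Lp.norm_def, Lp.norm_def]
  have hne : (‖B‖₊ : ℝ≥0∞) * eLpNorm (u : α → ℝ) p μ ≠ ∞ :=
    ENNReal.mul_ne_top ENNReal.coe_ne_top (Lp.eLpNorm_ne_top u)
  calc (eLpNorm (v : α → ℝ) p μ).toReal
      ≤ ((‖B‖₊ : ℝ≥0∞) * eLpNorm (u : α → ℝ) p μ).toReal := ENNReal.toReal_mono hne h1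
    _ = B * (eLpNorm (u : α → ℝ) p μ).toReal := by
        rw [ENNReal.toReal_mul, ENNReal.coe_toReal, coe_nnnorm, Real.norm_eq_abs,
          abs_of_nonneg hB]

lemma aux_memℒp_mul {c : α → ℝ} {B : ℝ} (hc : AEStronglyMeasurable c μ)
    (hbd : ∀ᵐ x ∂μ, |c x| ≤ B) (u : Lp ℝ p μ) :
    MemLp (fun x => c x * (u : α → ℝ) x) p μ :=
  MemLp.of_le_mul (Lp.memLp u) (hc.mul (Lp.aestronglyMeasurable u))
    (hbd.mono fun x hx => by
      rw [Real.norm_eq_abs, Real.norm_eq_abs, abs_mul]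
      exact mul_le_mul_of_nonneg_right hx (abs_nonneg _))

lemma aux_trunc {g : α → ℝ} (hg : AEMeasurable g μ) {B : ℝ} (hB : 0 ≤ B)
    (hbd : ∀ᵐ x ∂μ, |g x| ≤ B) :
    ∃ G : α → ℝ, Measurable G ∧ (∀ x, |G x| ≤ B) ∧ G =ᵐ[μ] g := by
  refine ⟨fun x => max (-B) (min B (hg.mk g x)), by measurability, fun x => ?_, ?_⟩
  · rw [abs_le]
    exact ⟨le_max_left _ _, max_le (le_trans (neg_nonpos.mpr hB) hB) (min_le_left _ _)⟩
  · filter_upwards [hg.ae_eq_mk, hbd] with x h1 h2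
    rw [abs_le] at h2
    rw [← h1, min_eq_right h2.2, max_eq_right h2.1]

lemma aux_lintegral_rpow_lt_top [Fact (1 ≤ p)] (hp : p ≠ ∞) {g : α → ℝ} (hg : MemLp g p μ) :
    ∫⁻ x, (‖g x‖₊ : ℝ≥0∞) ^ p.toReal ∂μ < ∞ := by
  have hpr : 0 < p.toReal := ENNReal.toReal_pos aux_p_ne_zero hp
  have h := hg.eLpNorm_lt_top
  rw [eLpNorm_eq_lintegral_rpow_enorm_toReal aux_p_ne_zero hp] at h
  change (∫⁻ x, (‖g x‖₊ : ℝ≥0∞) ^ p.toReal ∂μ) ^ (1 / p.toReal) < ∞ at h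
  by_contra hcon
  rw [not_lt, top_le_iff] at hcon
  rw [hcon, ENNReal.top_rpow_of_pos (by positivity)] at h
  exact (lt_irrefl _ h).elim

lemma aux_dct_eLpNorm [Fact (1 ≤ p)] (hp : p ≠ ∞) {g : ℕ → α → ℝ}
    (hgm : ∀ n, AEMeasurable (g n) μ) (u : Lp ℝ p μ) {K : ℝ}
    (hle : ∀ n, ∀ᵐ x ∂μ, |g n x| ≤ K * |(u : α → ℝ) x|)
    (hlim : ∀ᵐ x ∂μ, Tendsto (fun n => g n x) atTop (nhds 0)) :
    Tendsto (fun n => eLpNorm (g n) p μ) atTop (nhds 0) := by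
  have hp0 : p ≠ 0 := aux_p_ne_zero
  have hpr : 0 < p.toReal := ENNReal.toReal_pos hp0 hp
  have hKu : MemLp (fun x => K * (u : α → ℝ) x) p μ := (Lp.memLp u).const_mul K
  have h1 : Tendsto (fun n => ∫⁻ x, (‖g n x‖₊ : ℝ≥0∞) ^ p.toReal ∂μ) atTop (nhds 0) := by
    rw [show nhds (0 : ℝ≥0∞) = nhds (∫⁻ x, (fun _ : α => (0:ℝ≥0∞)) x ∂μ) by simp]
    refine tendsto_lintegral_of_dominated_convergence'
      (fun x => (‖K * (u : α → ℝ) x‖₊ : ℝ≥0∞) ^ p.toReal)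
      (fun n => ENNReal.continuous_rpow_const.measurable.comp_aemeasurable (hgm n).enorm)
      (fun n => ?_) (aux_lintegral_rpow_lt_top hp hKu).ne ?_
    · filter_upwards [hle n] with x hx
      refine ENNReal.rpow_le_rpow ?_ hpr.le
      rw [ENNReal.coe_le_coe, ← NNReal.coe_le_coe, coe_nnnorm, coe_nnnorm,
        Real.norm_eq_abs, Real.norm_eq_abs, abs_mul]
      exact hx.trans (mul_le_mul_of_nonneg_right (le_abs_self K) (abs_nonneg _))
    · filter_upwards [hlim] with x hx
      have h2 : Tendsto (fun n => (‖g n x‖₊ : ℝ≥0∞)) atTop (nhds 0) := by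
        have hc : Continuous fun r : ℝ => ((‖r‖₊ : ℝ≥0) : ℝ≥0∞) :=
          by fun_prop
        have h := (hc.tendsto 0).comp hx; simp only [nnnorm_zero, ENNReal.coe_zero] at h; exact h
      have h3 := ((ENNReal.continuous_rpow_const (y := p.toReal)).tendsto 0).comp h2
      have hz : (0 : ℝ≥0∞) ^ p.toReal = 0 := ENNReal.zero_rpow_of_pos hpr
      rw [hz] at h3
      exact h3.congr fun n => rfl
  have h2 : Tendsto (fun y : ℝ≥0∞ => y ^ (1 / p.toReal)) (nhds 0) (nhds 0) := by
    have h := (ENNReal.continuous_rpow_const (y := 1 / p.toReal)).tendsto 0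
    have hz : (0 : ℝ≥0∞) ^ (1 / p.toReal) = 0 := ENNReal.zero_rpow_of_pos (by positivity)
    rwa [hz] at h
  have h3 := h2.comp h1
  refine h3.congr fun n => ?_
  rw [Function.comp_apply]; exact (eLpNorm_eq_lintegral_rpow_enorm_toReal (μ := μ) (f := g n) hp0 hp).symm

end Aux

section Rep

variable {α : Type*} [MeasurableSpace α] {μ : MeasureTheory.Measure α} {p : ℝ≥0∞}

noncomputable def indLp [Fact (1 ≤ p)] (w : Lp ℝ p μ) (S : Set α) : Lp ℝ p μ :=
  letI := Classical.dec (MeasurableSet S)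
  if h : MeasurableSet S then ((Lp.memLp w).indicator h).toLp (S.indicator (w : α → ℝ)) else 0

lemma indLp_coe [Fact (1 ≤ p)] (w : Lp ℝ p μ) {S : Set α} (hS : MeasurableSet S) :
    (indLp w S : α → ℝ) =ᵐ[μ] S.indicator (w : α → ℝ) := by
  rw [indLp]; rw [dif_pos hS]; exact MemLp.coeFn_toLp _

lemma indLp_not_meas [Fact (1 ≤ p)] (w : Lp ℝ p μ) {S : Set α} (hS : ¬ MeasurableSet S) :
    indLp w S = 0 := by rw [indLp]; rw [dif_neg hS]

lemma indLp_null [Fact (1 ≤ p)] (w : Lp ℝ p μ) {S : Set α} (h : μ S = 0) :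
    indLp w S = 0 := by
  by_cases hS : MeasurableSet S
  · refine Lp.ext (((indLp_coe w hS).trans ?_).trans (Lp.coeFn_zero ℝ p μ).symm)
    have hn : ∀ᵐ x ∂μ, x ∉ S := by
      rw [ae_iff]
      simpa using h
    filter_upwards [hn] with x hx
    simp [Set.indicator_of_notMem hx]
  · exact indLp_not_meas w hS

lemma indLp_union [Fact (1 ≤ p)] (w : Lp ℝ p μ) {S T : Set α} (hST : Disjoint S T)
    (hS : MeasurableSet S) (hT : MeasurableSet T) :
    indLp w (S ∪ T) = indLp w S + indLp w T := by
  refine Lp.ext ?_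
  filter_upwards [indLp_coe w (hS.union hT), indLp_coe w hS, indLp_coe w hT,
    Lp.coeFn_add (indLp w S) (indLp w T)] with x e1 e2 e3 e4
  rw [e1, e4, Pi.add_apply, e2, e3, Set.indicator_union_of_disjoint hST]

lemma indLp_norm [Fact (1 ≤ p)] (hp0 : p ≠ 0) (hp : p ≠ ∞) (w : Lp ℝ p μ) {S : Set α}
    (hS : MeasurableSet S) :
    eLpNorm (indLp w S : α → ℝ) p μ
      = (∫⁻ x in S, (‖(w : α → ℝ) x‖₊ : ℝ≥0∞) ^ p.toReal ∂μ) ^ (1 / p.toReal) := by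
  rw [eLpNorm_congr_ae (indLp_coe w hS), eLpNorm_indicator_eq_eLpNorm_restrict hS,
    eLpNorm_eq_lintegral_rpow_enorm_toReal hp0 hp]
  rfl

theorem aux_rep [Fact (1 ≤ p)] [IsFiniteMeasure μ] (hp : p ≠ ∞)
    (θ : Lp ℝ p μ →L[ℝ] ℝ) (w : Lp ℝ p μ) :
    ∃ f : α → ℝ, Integrable f μ ∧
      ∀ (c : α → ℝ) (B : ℝ), Measurable c → (∀ x, |c x| ≤ B) →
      ∀ v : Lp ℝ p μ, (v : α → ℝ) =ᵐ[μ] (fun x => c x * (w : α → ℝ) x) →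
        θ v = ∫ x, c x * f x ∂μ := by
  have hp0 : p ≠ 0 := aux_p_ne_zero
  have hpr : 0 < p.toReal := ENNReal.toReal_pos hp0 hp
  have hGfin : ∫⁻ x, (‖(w : α → ℝ) x‖₊ : ℝ≥0∞) ^ p.toReal ∂μ < ∞ :=
    aux_lintegral_rpow_lt_top hp (Lp.memLp w)
  have hiU : ∀ (S : ℕ → Set α), (∀ i, MeasurableSet (S i)) → Pairwise (Function.onFun Disjoint S) →
      HasSum (fun i => θ (indLp w (S i))) (θ (indLp w (⋃ i, S i))) := by
    intro S hS hd
    classical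
    have hbU : ∀ F : Finset ℕ, indLp w (⋃ i ∈ F, S i) = ∑ i ∈ F, indLp w (S i) := by
      intro F
      induction F using Finset.induction_on with
      | empty =>
        rw [show (⋃ i ∈ (∅ : Finset ℕ), S i) = (∅ : Set α) by simp]
        rw [indLp_null w measure_empty, Finset.sum_empty]
      | @insert a F ha ih =>
        rw [show (⋃ i ∈ insert a F, S i) = S a ∪ ⋃ i ∈ F, S i from by
          simp [Set.biUnion_insert]]
        rw [indLp_union w ?_ (hS a) (F.measurableSet_biUnion fun i _ => hS i), ih,
          Finset.sum_insert ha]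
        exact Set.disjoint_iUnion₂_right.mpr fun i hi =>
          hd (fun h : a = i => ha (h ▸ hi))
    have key : ∀ F : Finset ℕ, ∑ i ∈ F, θ (indLp w (S i)) = θ (indLp w (⋃ i ∈ F, S i)) := by
      intro F; rw [hbU F, map_sum]
    rw [HasSum]
    refine Tendsto.congr (fun F => (key F).symm) ?_
    refine (θ.continuous.tendsto _).comp ?_
    rw [Metric.tendsto_nhds]
    intro ε hε
    have htot : ∫⁻ x in ⋃ i, S i, (‖(w : α → ℝ) x‖₊ : ℝ≥0∞) ^ p.toReal ∂μ ≠ ∞ :=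
      (lt_of_le_of_lt (setLIntegral_le_lintegral _ _) hGfin).ne
    have hsum : ∑' i, ∫⁻ x in S i, (‖(w : α → ℝ) x‖₊ : ℝ≥0∞) ^ p.toReal ∂μ ≠ ∞ := by
      rw [← lintegral_iUnion hS hd]; exact htot
    have htail := ENNReal.tendsto_tsum_compl_atTop_zero hsum
    have hδ0 : (0 : ℝ≥0∞) < (ENNReal.ofReal (ε/2)) ^ p.toReal :=
      ENNReal.rpow_pos (ENNReal.ofReal_pos.mpr (by linarith)) ENNReal.ofReal_ne_top
    filter_upwards [htail.eventually_lt_const hδ0] with F hF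
    have hsub : MeasurableSet (⋃ i ∈ F, S i) := F.measurableSet_biUnion fun i _ => hS i
    have hD : MeasurableSet ((⋃ i, S i) \ ⋃ i ∈ F, S i) := (MeasurableSet.iUnion hS).diff hsub
    have hsplit : indLp w (⋃ i, S i)
        = indLp w (⋃ i ∈ F, S i) + indLp w ((⋃ i, S i) \ ⋃ i ∈ F, S i) := by
      rw [← indLp_union w disjoint_sdiff_self_right hsub hD,
        Set.union_diff_cancel (Set.iUnion₂_subset fun i _ => Set.subset_iUnion S i)]
    rw [dist_eq_norm]
    have hdiff : indLp w (⋃ i ∈ F, S i) - indLp w (⋃ i, S i)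
        = - indLp w ((⋃ i, S i) \ ⋃ i ∈ F, S i) := by
      rw [hsplit]; abel
    rw [hdiff, norm_neg]
    have hle : ∫⁻ x in (⋃ i, S i) \ ⋃ i ∈ F, S i,
        (‖(w : α → ℝ) x‖₊ : ℝ≥0∞) ^ p.toReal ∂μ < (ENNReal.ofReal (ε/2)) ^ p.toReal := by
      refine lt_of_le_of_lt ?_ hF
      have hss : (⋃ i, S i) \ (⋃ i ∈ F, S i) ⊆ ⋃ i : {i // i ∉ F}, S i := by
        rintro x ⟨hx1, hx2⟩
        rcases Set.mem_iUnion.mp hx1 with ⟨i, hi⟩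
        rcases em (i ∈ F) with h | h
        · exact absurd (Set.mem_biUnion h hi) hx2
        · exact Set.mem_iUnion.mpr ⟨⟨i, h⟩, hi⟩
      exact le_trans (lintegral_mono_set hss) (lintegral_iUnion_le _ _)
    rw [Lp.norm_def, indLp_norm hp0 hp w hD]
    have h1 := ENNReal.rpow_le_rpow hle.le (by positivity : (0:ℝ) ≤ 1 / p.toReal)
    have h2 : ((ENNReal.ofReal (ε/2)) ^ p.toReal) ^ (1 / p.toReal) = ENNReal.ofReal (ε/2) := by
      rw [← ENNReal.rpow_mul, mul_one_div, div_self hpr.ne', ENNReal.rpow_one]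
    rw [h2] at h1
    refine lt_of_le_of_lt (ENNReal.toReal_mono ENNReal.ofReal_ne_top h1) ?_
    rw [ENNReal.toReal_ofReal (by linarith : (0:ℝ) ≤ ε/2)]
    linarith
  set ν : SignedMeasure α :=
    { measureOf' := fun S => θ (indLp w S)
      empty' := by show θ (indLp w ∅) = 0; rw [indLp_null w measure_empty, map_zero]
      not_measurable' := fun S hS => by
        show θ (indLp w S) = 0; rw [indLp_not_meas w hS, map_zero]
      m_iUnion' := hiU } with hν
  have hν_apply : ∀ S : Set α, ν S = θ (indLp w S) := fun S => rfl
  have hac : ν ≪ᵥ μ.toENNRealVectorMeasure := by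
    refine VectorMeasure.AbsolutelyContinuous.mk fun S hS h0 => ?_
    rw [Measure.toENNRealVectorMeasure_apply_measurable hS] at h0
    rw [hν_apply, indLp_null w h0, map_zero]
  set f : α → ℝ := ν.rnDeriv μ with hf
  have hfi : Integrable f μ := SignedMeasure.integrable_rnDeriv ν μ
  have hrepr : ∀ S : Set α, MeasurableSet S → ∫ x in S, f x ∂μ = θ (indLp w S) := by
    intro S hS
    have h := ν.withDensityᵥ_rnDeriv_eq μ hac
    have h2 := withDensityᵥ_apply hfi hS
    rw [h] at h2
    exact h2.symm.trans (hν_apply S)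
  have hsimple : ∀ c : SimpleFunc α ℝ, ∀ v : Lp ℝ p μ,
      (v : α → ℝ) =ᵐ[μ] (fun x => c x * (w : α → ℝ) x) → θ v = ∫ x, c x * f x ∂μ := by
    intro c
    refine SimpleFunc.induction ?_ ?_ c
    · intro y S hS v hv
      have hco : ∀ x : α,
          (SimpleFunc.piecewise S hS (SimpleFunc.const α y) (SimpleFunc.const α 0)) x
          = S.indicator (fun _ => y) x := by
        intro x
        rw [SimpleFunc.coe_piecewise]
        by_cases hx : x ∈ S
        · simp [Set.piecewise, Set.indicator, hx]
        · simp [Set.piecewise, Set.indicator, hx]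
      have hveq : v = y • indLp w S := by
        refine Lp.ext ?_
        filter_upwards [hv, indLp_coe w hS, Lp.coeFn_smul y (indLp w S)] with x e1 e2 e3
        rw [e1, e3, Pi.smul_apply, e2, hco x, smul_eq_mul]
        by_cases hx : x ∈ S
        · simp [Set.indicator_of_mem hx]
        · simp [Set.indicator_of_notMem hx]
      have hrw : (fun x => (SimpleFunc.piecewise S hS (SimpleFunc.const α y)
          (SimpleFunc.const α 0)) x * f x) = fun x => S.indicator (fun t => y * f t) x := by
        funext x
        rw [hco x]
        by_cases hx : x ∈ S
        · simp [Set.indicator_of_mem hx]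
        · simp [Set.indicator_of_notMem hx]
      rw [hveq, θ.map_smul, smul_eq_mul, ← hrepr S hS, hrw, integral_indicator hS,
        integral_const_mul]
    · intro c₁ c₂ _ ih₁ ih₂ v hv
      obtain ⟨B₁, hB₁⟩ := c₁.exists_forall_norm_le
      obtain ⟨B₂, hB₂⟩ := c₂.exists_forall_norm_le
      have hm₁ : MemLp (fun x => c₁ x * (w : α → ℝ) x) p μ :=
        aux_memℒp_mul c₁.aestronglyMeasurable
          (Filter.Eventually.of_forall fun x => by
            simpa [Real.norm_eq_abs] using hB₁ x) w
      have hm₂ : MemLp (fun x => c₂ x * (w : α → ℝ) x) p μ :=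
        aux_memℒp_mul c₂.aestronglyMeasurable
          (Filter.Eventually.of_forall fun x => by
            simpa [Real.norm_eq_abs] using hB₂ x) w
      have hv12 : v = hm₁.toLp _ + hm₂.toLp _ := by
        refine Lp.ext ?_
        filter_upwards [hv, hm₁.coeFn_toLp, hm₂.coeFn_toLp,
          Lp.coeFn_add (hm₁.toLp _) (hm₂.toLp _)] with x e1 e2 e3 e4
        rw [e1, e4, Pi.add_apply, e2, e3, SimpleFunc.coe_add, Pi.add_apply, add_mul]
      have int₁ : Integrable (fun x => c₁ x * f x) μ :=
        hfi.bdd_mul c₁.aestronglyMeasurable (Filter.Eventually.of_forall hB₁)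
      have int₂ : Integrable (fun x => c₂ x * f x) μ :=
        hfi.bdd_mul c₂.aestronglyMeasurable (Filter.Eventually.of_forall hB₂)
      have hrw : (fun x => ((c₁ + c₂) x : ℝ) * f x)
          = fun x => c₁ x * f x + c₂ x * f x := by
        funext x
        rw [SimpleFunc.coe_add, Pi.add_apply, add_mul]
      rw [hv12, map_add, ih₁ (hm₁.toLp _) hm₁.coeFn_toLp, ih₂ (hm₂.toLp _) hm₂.coeFn_toLp,
        hrw, integral_add int₁ int₂]
  refine ⟨f, hfi, ?_⟩
  intro c B hc hbd v hv
  set B' := max B 0 with hB'def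
  have hbd' : ∀ x, |c x| ≤ B' := fun x => (hbd x).trans (le_max_left _ _)
  have hB'0 : 0 ≤ B' := le_max_right _ _
  set ck : ℕ → SimpleFunc α ℝ := fun k => SimpleFunc.approxOn c hc univ 0 (mem_univ 0) k
    with hckdef
  have htend : ∀ x, Tendsto (fun k => ck k x) atTop (nhds (c x)) := fun x =>
    SimpleFunc.tendsto_approxOn hc (mem_univ 0) (by simp)
  have hbdk : ∀ k x, |ck k x| ≤ 2 * B' := by
    intro k x
    have h := SimpleFunc.norm_approxOn_zero_le hc (mem_univ 0) x k
    rw [Real.norm_eq_abs, Real.norm_eq_abs] at h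
    have := hbd' x
    calc |ck k x| ≤ |c x| + |c x| := h
      _ ≤ 2 * B' := by linarith
  have hmk : ∀ k, MemLp (fun x => ck k x * (w : α → ℝ) x) p μ := fun k =>
    aux_memℒp_mul (ck k).aestronglyMeasurable
      (Filter.Eventually.of_forall fun x => hbdk k x) w
  have hmc : MemLp (fun x => c x * (w : α → ℝ) x) p μ :=
    aux_memℒp_mul hc.aestronglyMeasurable (Filter.Eventually.of_forall hbd') w
  have hveq : v = hmc.toLp _ := Lp.ext (hv.trans hmc.coeFn_toLp.symm)
  have hwm : AEMeasurable (w : α → ℝ) μ := (Lp.aestronglyMeasurable w).aemeasurable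
  have hLp : Tendsto (fun k => (hmk k).toLp _) atTop (nhds (hmc.toLp _)) := by
    rw [Lp.tendsto_Lp_iff_tendsto_eLpNorm'']
    have hdct := aux_dct_eLpNorm (μ := μ) hp
      (g := fun k x => ck k x * (w : α → ℝ) x - c x * (w : α → ℝ) x)
      (fun k => ((ck k).measurable.aemeasurable.mul hwm).sub (hc.aemeasurable.mul hwm))
      w (K := 3 * B')
      (fun k => Filter.Eventually.of_forall fun x => by
        show |(ck k) x * (w : α → ℝ) x - c x * (w : α → ℝ) x| ≤ 3 * B' * |(w : α → ℝ) x|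
        rw [← sub_mul, abs_mul]
        refine mul_le_mul_of_nonneg_right ?_ (abs_nonneg _)
        calc |ck k x - c x| ≤ |ck k x| + |c x| := abs_sub _ _
          _ ≤ 3 * B' := by have h1 := hbdk k x; have h2 := hbd' x; linarith)
      (Filter.Eventually.of_forall fun x => by
        show Tendsto (fun k => (ck k) x * (w : α → ℝ) x - c x * (w : α → ℝ) x) atTop (nhds 0)
        have h1 := ((htend x).sub (tendsto_const_nhds (x := c x))).mul_const ((w : α → ℝ) x)
        rw [sub_self, zero_mul] at h1
        exact h1.congr fun k => by rw [sub_mul])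
    exact hdct.congr fun k => by rfl
  have hθ : Tendsto (fun k => θ ((hmk k).toLp _)) atTop (nhds (θ v)) := by
    rw [hveq]
    exact (θ.continuous.tendsto _).comp hLp
  have hval : ∀ k, θ ((hmk k).toLp _) = ∫ x, ck k x * f x ∂μ := fun k =>
    hsimple (ck k) _ (hmk k).coeFn_toLp
  have hInt : Tendsto (fun k => ∫ x, ck k x * f x ∂μ) atTop (nhds (∫ x, c x * f x ∂μ)) := by
    refine tendsto_integral_of_dominated_convergence (fun x => 2 * B' * |f x|)
      (fun k => (ck k).aestronglyMeasurable.mul hfi.1) (hfi.abs.const_mul (2 * B'))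
      (fun k => Filter.Eventually.of_forall fun x => ?_)
      (Filter.Eventually.of_forall fun x => (htend x).mul_const (f x))
    rw [Real.norm_eq_abs, abs_mul]
    exact mul_le_mul_of_nonneg_right (hbdk k x) (abs_nonneg _)
  exact tendsto_nhds_unique (hθ.congr hval) hInt

end Rep

/-- A `C₀`-semigroup of bounded operators on `E` (for times `t ≥ 0`). -/
structure C0Semigroup (E : Type*) [NormedAddCommGroup E] [NormedSpace ℝ E] where
  toFun : ℝ → E →L[ℝ] E
  map_zero : toFun 0 = 1
  map_add : ∀ s t : ℝ, 0 ≤ s → 0 ≤ t → toFun (s + t) = (toFun s).comp (toFun t)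
  strong_cont : ∀ u : E, ContinuousOn (fun t => toFun t u) (Ici 0)

/-- `-A` is the generator of the semigroup `T`:
`A u = lim_{t↓0} (u - T(t)u)/t` on its (maximal) domain. -/
def IsNegGenerator {E : Type*} [NormedAddCommGroup E] [NormedSpace ℝ E]
    (T : C0Semigroup E) (A : E →ₗ.[ℝ] E) : Prop :=
  (∀ u : A.domain, Tendsto (fun t : ℝ => t⁻¹ • ((u : E) - T.toFun t u))
      (nhdsWithin 0 (Ioi 0)) (nhds (A u))) ∧
    ∀ v : E, (∃ L : E, Tendsto (fun t : ℝ => t⁻¹ • (v - T.toFun t v))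
      (nhdsWithin 0 (Ioi 0)) (nhds L)) → v ∈ A.domain

/-- `R` is the resolvent `(μ + A)⁻¹` of the unbounded operator `A`. -/
structure IsResolventOf {E : Type*} [NormedAddCommGroup E] [NormedSpace ℝ E]
    (A : E →ₗ.[ℝ] E) (μ : ℝ) (R : E →L[ℝ] E) : Prop where
  mem : ∀ f : E, R f ∈ A.domain
  right_inv : ∀ f : E, μ • R f + A ⟨R f, mem f⟩ = f
  left_inv : ∀ u : A.domain, R (μ • (u : E) + A u) = (u : E)

/-- The perturbation `A + M` of `A` by a bounded operator `M`. -/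
def pmapAdd {E : Type*} [NormedAddCommGroup E] [NormedSpace ℝ E]
    (A : E →ₗ.[ℝ] E) (M : E →L[ℝ] E) : E →ₗ.[ℝ] E :=
  ⟨A.domain, A.toFun + (M : E →ₗ[ℝ] E).comp A.domain.subtype⟩

open scoped ENNReal

set_option maxHeartbeats 1600000 in
/-- Resolvent convergence under weak* convergence of potentials:
if `mₙ → m` weak* in `L^∞`, `R = (ω+A+m)⁻¹` is compact and the resolvents
`Rₙ = (ω+A+mₙ)⁻¹` are uniformly bounded, then `‖R Cₙ R‖ → 0` and `Rₙ → R`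
in operator norm, where `Cₙ` is multiplication by `mₙ - m`. -/
theorem stmt_10 {N : ℕ} (Ω : Set (Fin N → ℝ)) (hΩ : IsOpen Ω)
    (hΩb : Bornology.IsBounded Ω)
    (p : ℝ≥0∞) [Fact (1 ≤ p)] (hp : p ≠ ∞)
    (A : Lp ℝ p (volume.restrict Ω) →ₗ.[ℝ] Lp ℝ p (volume.restrict Ω))
    (ω : ℝ)
    (mn : ℕ → (Fin N → ℝ) → ℝ) (m : (Fin N → ℝ) → ℝ)
    (C : ℝ) (hmbd : ∀ᵐ x ∂(volume.restrict Ω), |m x| ≤ C)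
    (hmnbd : ∀ n, ∀ᵐ x ∂(volume.restrict Ω), |mn n x| ≤ C)
    -- weak* convergence in L^∞
    (hweak : ∀ g : (Fin N → ℝ) → ℝ, Integrable g (volume.restrict Ω) →
      Tendsto (fun n => ∫ x, mn n x * g x ∂(volume.restrict Ω)) atTop
        (nhds (∫ x, m x * g x ∂(volume.restrict Ω))))
    (Mn : ℕ → Lp ℝ p (volume.restrict Ω) →L[ℝ] Lp ℝ p (volume.restrict Ω))
    (M : Lp ℝ p (volume.restrict Ω) →L[ℝ] Lp ℝ p (volume.restrict Ω))
    (hMn : ∀ n, ∀ u : Lp ℝ p (volume.restrict Ω),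
      (Mn n u : (Fin N → ℝ) → ℝ) =ᵐ[volume.restrict Ω] fun x => mn n x * (u : (Fin N → ℝ) → ℝ) x)
    (hM : ∀ u : Lp ℝ p (volume.restrict Ω),
      (M u : (Fin N → ℝ) → ℝ) =ᵐ[volume.restrict Ω] fun x => m x * (u : (Fin N → ℝ) → ℝ) x)
    (R : Lp ℝ p (volume.restrict Ω) →L[ℝ] Lp ℝ p (volume.restrict Ω))
    (hR : IsResolventOf (pmapAdd A M) ω R) (hRcomp : IsCompactOperator R)
    (Rn : ℕ → Lp ℝ p (volume.restrict Ω) →L[ℝ] Lp ℝ p (volume.restrict Ω))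
    (hRn : ∀ n, IsResolventOf (pmapAdd A (Mn n)) ω (Rn n))
    (hbdd : ∃ K : ℝ, ∀ n, ‖Rn n‖ ≤ K) :
    Tendsto (fun n => ‖R.comp ((Mn n - M).comp R)‖) atTop (nhds 0) ∧
      Tendsto Rn atTop (nhds R) := by

  classical
  haveI : IsFiniteMeasure (volume.restrict (Ω : Set (Fin N → ℝ))) := ⟨by
    rw [Measure.restrict_apply_univ]; exact hΩb.measure_lt_top⟩
  set B : ℝ := 2 * max C 0 with hBdef
  have hB0 : 0 ≤ B := by positivity
  have hC' : ∀ n, ∀ᵐ x ∂(volume.restrict Ω), |mn n x - m x| ≤ B := by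
    intro n
    filter_upwards [hmbd, hmnbd n] with x h1 h2
    have h3 : |mn n x - m x| ≤ |mn n x| + |m x| := abs_sub _ _
    have hc : C ≤ max C 0 := le_max_left _ _
    rw [hBdef]; linarith
  have hdiff_ae : ∀ n (u : Lp ℝ p (volume.restrict Ω)), (((Mn n - M) u : Lp ℝ p (volume.restrict Ω)) : (Fin N → ℝ) → ℝ)
      =ᵐ[volume.restrict Ω] fun x => (mn n x - m x) * (u : (Fin N → ℝ) → ℝ) x := by
    intro n u
    have h0 : (((Mn n - M) u : Lp ℝ p (volume.restrict Ω)) : (Fin N → ℝ) → ℝ)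
        =ᵐ[volume.restrict Ω] fun x => (Mn n u : (Fin N → ℝ) → ℝ) x - (M u : (Fin N → ℝ) → ℝ) x := by
      rw [ContinuousLinearMap.sub_apply]
      exact Lp.coeFn_sub _ _
    filter_upwards [h0, hMn n u, hM u] with x e0 e1 e2
    rw [e0, e1, e2, sub_mul]
  have hCbound : ∀ n (u : Lp ℝ p (volume.restrict Ω)), ‖(Mn n - M) u‖ ≤ B * ‖u‖ := by
    intro n u
    refine aux_norm_le hB0 ?_
    filter_upwards [hdiff_ae n u, hC' n] with x e1 e2
    rw [e1, abs_mul]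
    exact mul_le_mul_of_nonneg_right e2 (abs_nonneg _)
  have hopC : ∀ n, ‖Mn n - M‖ ≤ B := fun n =>
    ContinuousLinearMap.opNorm_le_bound _ hB0 (hCbound n)
  have hmnm : ∀ n, AEMeasurable (mn n) (volume.restrict Ω) := by
    intro n
    have h1 := hMn n ((memLp_const (1:ℝ)).toLp _)
    have h2 := MemLp.coeFn_toLp (memLp_const (1:ℝ) (μ := volume.restrict Ω) (p := p))
    have h3 : (mn n) =ᵐ[volume.restrict Ω] ((Mn n ((memLp_const (1:ℝ)).toLp _)) : (Fin N → ℝ) → ℝ) := by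
      filter_upwards [h1, h2] with x e1 e2
      rw [e1, e2]; simp
    exact (aemeasurable_congr h3).mpr (Lp.aestronglyMeasurable _).aemeasurable
  have hmm : AEMeasurable m (volume.restrict Ω) := by
    have h1 := hM ((memLp_const (1:ℝ)).toLp _)
    have h2 := MemLp.coeFn_toLp (memLp_const (1:ℝ) (μ := volume.restrict Ω) (p := p))
    have h3 : m =ᵐ[volume.restrict Ω] ((M ((memLp_const (1:ℝ)).toLp _)) : (Fin N → ℝ) → ℝ) := by
      filter_upwards [h1, h2] with x e1 e2
      rw [e1, e2]; simp
    exact (aemeasurable_congr h3).mpr (Lp.aestronglyMeasurable _).aemeasurable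
  have step2 : ∀ (θ : Lp ℝ p (volume.restrict Ω) →L[ℝ] ℝ) (w : Lp ℝ p (volume.restrict Ω)),
      Tendsto (fun n => θ ((Mn n - M) w)) atTop (nhds 0) := by
    intro θ w
    obtain ⟨f, hfi, hf⟩ := aux_rep hp θ w
    have hDn : ∀ n, ∃ G : (Fin N → ℝ) → ℝ, Measurable G ∧ (∀ x, |G x| ≤ B) ∧
        G =ᵐ[volume.restrict Ω] fun x => mn n x - m x :=
      fun n => aux_trunc ((hmnm n).sub hmm) hB0 (hC' n)
    choose D hDmeas hDbd hDae using hDn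
    have hθeq : ∀ n, θ ((Mn n - M) w) = ∫ x, D n x * f x ∂(volume.restrict Ω) := by
      intro n
      refine hf (D n) B (hDmeas n) (hDbd n) _ ?_
      filter_upwards [hdiff_ae n w, hDae n] with x e1 e2
      rw [e1, e2]
    have hCfix : ∀ᵐ x ∂(volume.restrict Ω), |m x| ≤ max C 0 := hmbd.mono fun x h => h.trans (le_max_left _ _)
    obtain ⟨Em, hEm_meas, hEm_bd, hEm_ae⟩ := aux_trunc hmm (le_max_right C 0) hCfix
    have hintm : Integrable (fun x => m x * f x) (volume.restrict Ω) := by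
      refine (hfi.bdd_mul (c := max C 0) hEm_meas.aestronglyMeasurable (Filter.Eventually.of_forall fun x => by
        simpa [Real.norm_eq_abs] using hEm_bd x)).congr ?_
      filter_upwards [hEm_ae] with x e
      rw [e]
    have hintn : ∀ n, Integrable (fun x => mn n x * f x) (volume.restrict Ω) := by
      intro n
      obtain ⟨En, h1, h2, h3⟩ := aux_trunc (hmnm n) (le_max_right C 0)
        ((hmnbd n).mono fun x h => h.trans (le_max_left _ _))
      refine (hfi.bdd_mul (c := max C 0) h1.aestronglyMeasurable (Filter.Eventually.of_forall fun x => by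
        simpa [Real.norm_eq_abs] using h2 x)).congr ?_
      filter_upwards [h3] with x e
      rw [e]
    have hint_eq : ∀ n, ∫ x, D n x * f x ∂(volume.restrict Ω)
        = (∫ x, mn n x * f x ∂(volume.restrict Ω)) - ∫ x, m x * f x ∂(volume.restrict Ω) := by
      intro n
      rw [← integral_sub (hintn n) hintm]
      refine integral_congr_ae ?_
      filter_upwards [hDae n] with x e
      rw [e, sub_mul]
    have hw := (hweak f hfi).sub (tendsto_const_nhds (x := ∫ x, m x * f x ∂(volume.restrict Ω)))
    rw [sub_self] at hw
    exact hw.congr fun n => ((hθeq n).trans (hint_eq n)).symm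
  have step3 : ∀ w : Lp ℝ p (volume.restrict Ω),
      Tendsto (fun n => R ((Mn n - M) w)) atTop (nhds (0 : Lp ℝ p (volume.restrict Ω))) := by
    intro w
    have hKc : IsCompact (closure ((R : Lp ℝ p (volume.restrict Ω) →ₗ[ℝ] Lp ℝ p (volume.restrict Ω)) ''
        Metric.closedBall 0 (B * ‖w‖))) :=
      IsCompactOperator.isCompact_closure_image_closedBall (f := (R : Lp ℝ p (volume.restrict Ω) →ₗ[ℝ] Lp ℝ p (volume.restrict Ω)))
        hRcomp (B * ‖w‖)
    apply tendsto_of_subseq_tendsto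
    intro ns hns
    have hmem : ∀ j, R ((Mn (ns j) - M) w) ∈ closure ((R : Lp ℝ p (volume.restrict Ω) →ₗ[ℝ] Lp ℝ p (volume.restrict Ω)) ''
        Metric.closedBall 0 (B * ‖w‖)) := by
      intro j
      refine subset_closure ⟨(Mn (ns j) - M) w, ?_, rfl⟩
      rw [Metric.mem_closedBall, dist_zero_right]
      exact hCbound (ns j) w
    obtain ⟨z, hzK, φ, hφ, hzt⟩ := hKc.tendsto_subseq hmem
    refine ⟨φ, ?_⟩
    have hz : z = 0 := by
      apply NormedSpace.eq_zero_of_forall_dual_eq_zero ℝ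
      intro ψ
      have h1 : Tendsto (fun n => ψ (R ((Mn n - M) w))) atTop (nhds 0) := step2 (ψ.comp R) w
      have h2 := h1.comp (hns.comp hφ.tendsto_atTop)
      have h3 : Tendsto (fun j => ψ (R ((Mn (ns (φ j)) - M) w))) atTop (nhds (ψ z)) :=
        (ψ.continuous.tendsto z).comp hzt
      exact tendsto_nhds_unique h3 h2
    rw [hz] at hzt
    exact hzt
  have step4 : Tendsto (fun n => ‖R.comp ((Mn n - M).comp R)‖) atTop (nhds 0) := by
    have hKc : IsCompact (closure ((R : Lp ℝ p (volume.restrict Ω) →ₗ[ℝ] Lp ℝ p (volume.restrict Ω)) '' Metric.closedBall 0 1)) :=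
      IsCompactOperator.isCompact_closure_image_closedBall (f := (R : Lp ℝ p (volume.restrict Ω) →ₗ[ℝ] Lp ℝ p (volume.restrict Ω)))
        hRcomp 1
    rw [NormedAddCommGroup.tendsto_nhds_zero]
    intro ε hε
    have hL0 : (0:ℝ) ≤ ‖R‖ * B := by positivity
    set L : ℝ := ‖R‖ * B with hL
    set δ₀ : ℝ := ε / (2 * (L + 1)) with hδ₀
    have hL1 : (0:ℝ) < L + 1 := by rw [hL]; positivity
    have hδ₀pos : 0 < δ₀ := by rw [hδ₀]; positivity
    obtain ⟨t, hts, htfin, htcover⟩ := finite_cover_balls_of_compact hKc hδ₀pos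
    have hev : ∀ᶠ n in atTop, ∀ y ∈ t, ‖R ((Mn n - M) y)‖ < ε / 4 := by
      rw [Filter.eventually_all_finite htfin]
      intro y hy
      have h1 : Tendsto (fun n => ‖R ((Mn n - M) y)‖) atTop (nhds 0) := by
        have h0 := (step3 y).norm
        rwa [norm_zero] at h0
      exact h1.eventually_lt_const (by positivity)
    filter_upwards [hev] with n hn
    rw [Real.norm_eq_abs, abs_of_nonneg (norm_nonneg _)]
    have hb : ‖R.comp ((Mn n - M).comp R)‖ ≤ L * δ₀ + ε / 4 := by
      refine ContinuousLinearMap.opNorm_le_bound _ (by positivity) ?_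
      intro u
      rcases eq_or_ne u 0 with rfl | hu
      · simp
      have hru : 0 < ‖u‖ := norm_pos_iff.mpr hu
      set u' : Lp ℝ p (volume.restrict Ω) := ‖u‖⁻¹ • u with hu'
      have hu'n : ‖u'‖ ≤ 1 := by
        rw [hu', norm_smul, norm_inv, norm_norm, inv_mul_cancel₀ hru.ne']
      have hmemK : R u' ∈ closure ((R : Lp ℝ p (volume.restrict Ω) →ₗ[ℝ] Lp ℝ p (volume.restrict Ω)) '' Metric.closedBall 0 1) :=
        subset_closure ⟨u', by simpa [Metric.mem_closedBall, dist_zero_right] using hu'n, rfl⟩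
      obtain ⟨y, hyt, hdy⟩ : ∃ y ∈ t, R u' ∈ Metric.ball y δ₀ := by
        have h := htcover hmemK
        simpa using h
      have hyd : ‖R u' - y‖ < δ₀ := by rwa [Metric.mem_ball, dist_eq_norm] at hdy
      have hest : ‖R ((Mn n - M) (R u'))‖ ≤ L * δ₀ + ε / 4 := by
        have e1 : R ((Mn n - M) (R u')) = R ((Mn n - M) (R u' - y)) + R ((Mn n - M) y) := by
          rw [← map_add, ← map_add, sub_add_cancel]
        rw [e1]
        refine (norm_add_le _ _).trans ?_
        have h2 : ‖R ((Mn n - M) (R u' - y))‖ ≤ L * δ₀ := by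
          calc ‖R ((Mn n - M) (R u' - y))‖ ≤ ‖R‖ * ‖(Mn n - M) (R u' - y)‖ := R.le_opNorm _
            _ ≤ ‖R‖ * (B * ‖R u' - y‖) :=
                mul_le_mul_of_nonneg_left (hCbound n _) (norm_nonneg R)
            _ = (‖R‖ * B) * ‖R u' - y‖ := by ring
            _ ≤ L * δ₀ := by
                rw [hL]
                exact mul_le_mul_of_nonneg_left hyd.le hL0
        have h3 : ‖R ((Mn n - M) y)‖ ≤ ε / 4 := (hn y hyt).le
        linarith
      have hscale : R ((Mn n - M) (R u)) = ‖u‖ • R ((Mn n - M) (R u')) := by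
        rw [hu', R.map_smul, (Mn n - M).map_smul, R.map_smul, smul_smul,
          mul_inv_cancel₀ hru.ne', one_smul]
      calc ‖(R.comp ((Mn n - M).comp R)) u‖ = ‖R ((Mn n - M) (R u))‖ := rfl
        _ = ‖u‖ * ‖R ((Mn n - M) (R u'))‖ := by rw [hscale, norm_smul, norm_norm]
        _ ≤ ‖u‖ * (L * δ₀ + ε / 4) := mul_le_mul_of_nonneg_left hest (norm_nonneg _)
        _ = (L * δ₀ + ε / 4) * ‖u‖ := mul_comm _ _
    have hfin : L * δ₀ + ε / 4 < ε := by
      have h1 : L * δ₀ ≤ ε / 2 := by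
        rw [hδ₀]
        calc L * (ε / (2 * (L + 1))) = ε * (L / (2 * (L + 1))) := by ring
          _ ≤ ε * (1 / 2) := by
              refine mul_le_mul_of_nonneg_left ?_ hε.le
              rw [div_le_div_iff₀ (by linarith) two_pos]
              have : (0:ℝ) ≤ L := hL ▸ hL0
              linarith
          _ = ε / 2 := by ring
      linarith
    exact lt_of_le_of_lt hb hfin
  have hid : ∀ n (g : Lp ℝ p (volume.restrict Ω)), Rn n g = R g + Rn n ((M - Mn n) (R g)) := by
    intro n g
    have hmem : R g ∈ (pmapAdd A M).domain := hR.mem g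
    have hmem' : R g ∈ (pmapAdd A (Mn n)).domain := hmem
    have h1 := hR.right_inv g
    have h2 := (hRn n).left_inv ⟨R g, hmem'⟩
    have e1 : (pmapAdd A M) ⟨R g, hR.mem g⟩ = A.toFun ⟨R g, hmem⟩ + M (R g) := rfl
    have e2 : (pmapAdd A (Mn n)) ⟨R g, hmem'⟩ = A.toFun ⟨R g, hmem⟩ + Mn n (R g) := rfl
    have h1' : ω • R g + (A.toFun ⟨R g, hmem⟩ + M (R g)) = g := by rw [← e1]; exact h1
    have e3 : ω • ((⟨R g, hmem'⟩ : (pmapAdd A (Mn n)).domain) : Lp ℝ p (volume.restrict Ω))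
        + (pmapAdd A (Mn n)) ⟨R g, hmem'⟩ = g + (Mn n - M) (R g) := by
      rw [e2]
      calc ω • R g + (A.toFun ⟨R g, hmem⟩ + Mn n (R g))
          = (ω • R g + (A.toFun ⟨R g, hmem⟩ + M (R g))) + (Mn n (R g) - M (R g)) := by abel
        _ = g + (Mn n - M) (R g) := by rw [h1', ContinuousLinearMap.sub_apply]
    rw [e3] at h2
    have h4 : Rn n g + Rn n ((Mn n - M) (R g)) = R g := by
      rw [← map_add]; exact h2
    have h5 : (M - Mn n) (R g) = -((Mn n - M) (R g)) := by
      rw [ContinuousLinearMap.sub_apply, ContinuousLinearMap.sub_apply, neg_sub]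
    rw [h5, map_neg]
    have := eq_sub_of_add_eq h4
    rw [this]
    abel
  have hnegnorm : ∀ n, ‖R.comp ((M - Mn n).comp R)‖ = ‖R.comp ((Mn n - M).comp R)‖ := by
    intro n
    have e : R.comp ((M - Mn n).comp R) = -(R.comp ((Mn n - M).comp R)) := by
      refine ContinuousLinearMap.ext fun g => ?_
      simp only [ContinuousLinearMap.comp_apply, ContinuousLinearMap.sub_apply,
        ContinuousLinearMap.neg_apply, map_sub]
      abel
    rw [e, norm_neg]
  obtain ⟨K, hK⟩ := hbdd
  set K' : ℝ := max K 0 with hK'def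
  have hK'0 : 0 ≤ K' := le_max_right _ _
  have hK' : ∀ n, ‖Rn n‖ ≤ K' := fun n => (hK n).trans (le_max_left _ _)
  have hbound : ∀ n, ‖Rn n - R‖ ≤ (1 + K' * B) * ‖R.comp ((Mn n - M).comp R)‖ := by
    intro n
    have hQid : Rn n - R = (Rn n).comp ((M - Mn n).comp R) := by
      refine ContinuousLinearMap.ext fun g => ?_
      simp only [ContinuousLinearMap.sub_apply, ContinuousLinearMap.comp_apply]
      rw [hid n g]
      abel
    have hRid : Rn n = R + (Rn n).comp ((M - Mn n).comp R) := by
      refine ContinuousLinearMap.ext fun g => ?_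
      simp only [ContinuousLinearMap.add_apply, ContinuousLinearMap.comp_apply]
      exact hid n g
    set Q : Lp ℝ p (volume.restrict Ω) →L[ℝ] Lp ℝ p (volume.restrict Ω) := (M - Mn n).comp R with hQdef
    have hsplit : (Rn n).comp Q = R.comp Q + ((Rn n).comp Q).comp Q := by
      calc (Rn n).comp Q = (R + (Rn n).comp Q).comp Q := by rw [← hRid]
        _ = R.comp Q + ((Rn n).comp Q).comp Q := by rw [ContinuousLinearMap.add_comp]
    rw [hQid, hsplit]
    refine (norm_add_le _ _).trans ?_
    have h1 : ‖R.comp Q‖ = ‖R.comp ((Mn n - M).comp R)‖ := hnegnorm n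
    have h2 : ‖((Rn n).comp Q).comp Q‖ ≤ K' * B * ‖R.comp ((Mn n - M).comp R)‖ := by
      have e : ((Rn n).comp Q).comp Q = ((Rn n).comp (M - Mn n)).comp (R.comp Q) := by
        refine ContinuousLinearMap.ext fun g => ?_
        rfl
      rw [e]
      calc ‖((Rn n).comp (M - Mn n)).comp (R.comp Q)‖
          ≤ ‖(Rn n).comp (M - Mn n)‖ * ‖R.comp Q‖ := ContinuousLinearMap.opNorm_comp_le _ _
        _ ≤ (K' * B) * ‖R.comp Q‖ := by
            refine mul_le_mul_of_nonneg_right ?_ (norm_nonneg _)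
            have hopC' : ‖M - Mn n‖ ≤ B := by
              rw [show M - Mn n = -(Mn n - M) by abel, norm_neg]
              exact hopC n
            exact (ContinuousLinearMap.opNorm_comp_le _ _).trans
              (mul_le_mul (hK' n) hopC' (norm_nonneg _) hK'0)
        _ = K' * B * ‖R.comp ((Mn n - M).comp R)‖ := by rw [h1]
    have h0 : (0:ℝ) ≤ ‖R.comp ((Mn n - M).comp R)‖ := norm_nonneg _
    nlinarith [h1, h2]
  refine ⟨step4, ?_⟩
  rw [tendsto_iff_norm_sub_tendsto_zero]
  have hlim : Tendsto (fun n => (1 + K' * B) * ‖R.comp ((Mn n - M).comp R)‖) atTop (nhds 0) := by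
    simpa using step4.const_mul (1 + K' * B)
  exact squeeze_zero (fun n => norm_nonneg _) hbound hlim
end

section
/- (Abstract Kato inequality) Let Ω ⊆ ℝᴺ be a bounded domain and E = L^p(Ω) with 1 ≤ p < ∞. Let -A generate a positive C₀-semigroup (T(t)) on E. Then for all u ∈ D(A) and all φ ∈ D(A') with φ ≥ 0, one has ⟨1_{{u>0}} Au, φ⟩ ≥ ⟨u⁺, A'φ⟩. -/
open MeasureTheory

open Filter Set

open scoped ENNReal

section aux
variable {E : Type*} [NormedAddCommGroup E] [NormedSpace ℝ E] [CompleteSpace E]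

lemma ftc_right {f : ℝ → E} (hf : ContinuousOn f (Ici 0)) {a : ℝ} (ha : 0 ≤ a) :
    Tendsto (fun h : ℝ => h⁻¹ • ∫ s in a..(a + h), f s)
      (nhdsWithin 0 (Ioi 0)) (nhds (f a)) := by
  have hmeas : StronglyMeasurableAtFilter f (nhdsWithin a (Ioi a)) volume := by
    refine ⟨Ici 0, ?_, hf.aestronglyMeasurable measurableSet_Ici⟩
    exact mem_of_superset self_mem_nhdsWithin (fun x hx => le_of_lt (lt_of_le_of_lt ha hx))
  have hcont : ContinuousWithinAt f (Ioi a) a :=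
    (hf.continuousWithinAt (mem_Ici.2 ha)).mono fun x hx => le_trans ha (le_of_lt hx)
  have hd : HasDerivWithinAt (fun y => ∫ s in a..y, f s) (f a) (Ici a) a := by
    haveI : IntervalIntegrable f volume a a := IntervalIntegrable.refl
    exact intervalIntegral.integral_hasDerivWithinAt_right this hmeas hcont
  rw [hasDerivWithinAt_iff_tendsto_slope] at hd
  have hmap : Tendsto (fun h : ℝ => a + h) (nhdsWithin 0 (Ioi 0)) (nhdsWithin a (Ici a \ {a})) := by
    apply tendsto_nhdsWithin_of_tendsto_nhds_of_eventually_within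
    · have h0 : Tendsto (fun h : ℝ => a + h) (nhds 0) (nhds (a + 0)) :=
        tendsto_const_nhds.add tendsto_id
      rw [add_zero] at h0
      exact h0.mono_left nhdsWithin_le_nhds
    · filter_upwards [self_mem_nhdsWithin] with h hh
      exact ⟨le_of_lt (show a < a + h by linarith [mem_Ioi.1 hh]), by simp; linarith [mem_Ioi.1 hh]⟩
  have := hd.comp hmap
  refine this.congr fun h => ?_
  simp [slope_def_module, intervalIntegral.integral_same]

lemma integral_orbit_mem_domain {T : C0Semigroup E} {A : E →ₗ.[ℝ] E}
    (hgen : IsNegGenerator T A) (v : E) {t : ℝ} (ht : 0 < t) :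
    ∃ hm : (∫ s in (0:ℝ)..t, T.toFun s v) ∈ A.domain,
      A ⟨_, hm⟩ = v - T.toFun t v := by
  set f : ℝ → E := fun s => T.toFun s v with hf
  have hfc : ContinuousOn f (Ici 0) := T.strong_cont v
  have hint : ∀ a b : ℝ, 0 ≤ a → 0 ≤ b → IntervalIntegrable f volume a b := by
    intro a b ha hb
    apply (hfc.mono ?_).intervalIntegrable
    intro x hx
    have := hx.1
    simp only [inf_le_iff] at this
    rcases this with h | h <;> exact le_trans (by assumption) h
  set I : E := ∫ s in (0:ℝ)..t, f s with hI
  have key : Tendsto (fun h : ℝ => h⁻¹ • (I - T.toFun h I))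
      (nhdsWithin 0 (Ioi 0)) (nhds (v - f t)) := by
    have heq : ∀ h ∈ Ioi (0:ℝ), I - T.toFun h I =
        (∫ s in (0:ℝ)..h, f s) - ∫ s in t..(t + h), f s := by
      intro h hh
      rw [mem_Ioi] at hh
      have h1 : T.toFun h I = ∫ s in (0:ℝ)..t, T.toFun h (f s) :=
        ((T.toFun h).intervalIntegral_comp_comm (hint 0 t le_rfl ht.le)).symm
      have h2 : (∫ s in (0:ℝ)..t, T.toFun h (f s)) = ∫ s in (0:ℝ)..t, f (s + h) := by
        apply intervalIntegral.integral_congr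
        intro s hs
        rw [uIcc_of_le ht.le] at hs
        show T.toFun h (T.toFun s v) = T.toFun (s + h) v
        rw [add_comm, T.map_add h s hh.le hs.1]
        rfl
      have h3 : (∫ s in (0:ℝ)..t, f (s + h)) = ∫ s in (0 + h)..(t + h), f s :=
        intervalIntegral.integral_comp_add_right f h
      have c1 : (∫ s in (0:ℝ)..h, f s) + (∫ s in h..(t + h), f s)
          = ∫ s in (0:ℝ)..(t + h), f s :=
        intervalIntegral.integral_add_adjacent_intervals (hint 0 h le_rfl hh.le)
          (hint h (t + h) hh.le (by linarith))
      have c2 : I + (∫ s in t..(t + h), f s) = ∫ s in (0:ℝ)..(t + h), f s :=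
        intervalIntegral.integral_add_adjacent_intervals (hint 0 t le_rfl ht.le)
          (hint t (t + h) ht.le (by linarith))
      rw [h1, h2, h3, zero_add]
      have := c2.trans c1.symm
      rw [sub_eq_sub_iff_add_eq_add]
      linear_combination (norm := abel) this
    have lim1 : Tendsto (fun h : ℝ => h⁻¹ • ∫ s in (0:ℝ)..h, f s)
        (nhdsWithin 0 (Ioi 0)) (nhds v) := by
      have := ftc_right hfc (le_refl (0:ℝ))
      have hf0 : f 0 = v := by
        show T.toFun 0 v = v
        rw [T.map_zero]; rfl
      rw [hf0] at this
      refine this.congr fun h => by rw [zero_add]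
    have lim2 : Tendsto (fun h : ℝ => h⁻¹ • ∫ s in t..(t + h), f s)
        (nhdsWithin 0 (Ioi 0)) (nhds (f t)) := ftc_right hfc ht.le
    have := lim1.sub lim2
    apply Tendsto.congr' ?_ this
    filter_upwards [self_mem_nhdsWithin] with h hh
    rw [heq h hh, smul_sub]
  have hm : I ∈ A.domain := hgen.2 I ⟨v - f t, key⟩
  refine ⟨hm, ?_⟩
  exact tendsto_nhds_unique (hgen.1 ⟨I, hm⟩) key

end aux

/-- Abstract Kato inequality: if `-A` generates a positive C₀-semigroup on
`L^p(Ω)`, then `⟨1_{u>0}·Au, φ⟩ ≥ ⟨u⁺, A'φ⟩` for `u ∈ D(A)` and `0 ≤ φ ∈ D(A')`. -/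
theorem stmt_12 {N : ℕ} (Ω : Set (Fin N → ℝ)) (hΩo : IsOpen Ω)
    (hΩc : IsConnected Ω) (hΩb : Bornology.IsBounded Ω)
    (p : ℝ≥0∞) [Fact (1 ≤ p)] (hp : p ≠ ∞)
    (T : C0Semigroup (Lp ℝ p (volume.restrict Ω)))
    (A : Lp ℝ p (volume.restrict Ω) →ₗ.[ℝ] Lp ℝ p (volume.restrict Ω))
    (hgen : IsNegGenerator T A)
    (hTpos : ∀ t : ℝ, 0 ≤ t → ∀ f, 0 ≤ f → 0 ≤ T.toFun t f)
    (u : A.domain)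
    -- φ ∈ D(A')₊ with A'φ = ψ, i.e. ⟨Av, φ⟩ = ⟨v, ψ⟩ for all v ∈ D(A)
    (φ ψ : Lp ℝ p (volume.restrict Ω) →L[ℝ] ℝ)
    (hφpos : ∀ f, 0 ≤ f → 0 ≤ φ f)
    (hadj : ∀ v : A.domain, φ (A v) = ψ (v : Lp ℝ p (volume.restrict Ω)))
    -- w = 1_{u>0}·Au
    (w : Lp ℝ p (volume.restrict Ω))
    (hw : (w : (Fin N → ℝ) → ℝ) =ᵐ[volume.restrict Ω] fun x =>
      if 0 < ((u : Lp ℝ p (volume.restrict Ω)) : (Fin N → ℝ) → ℝ) x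
        then ((A u : Lp ℝ p (volume.restrict Ω)) : (Fin N → ℝ) → ℝ) x else 0) :
    ψ ((u : Lp ℝ p (volume.restrict Ω)) ⊔ 0) ≤ φ w := by
  classical
  set up : Lp ℝ p (volume.restrict Ω) := (u : Lp ℝ p (volume.restrict Ω)) ⊔ 0 with hupdef
  -- the set {u > 0}
  set S : Set (Fin N → ℝ) := {x | 0 < ((u : Lp ℝ p (volume.restrict Ω)) : (Fin N → ℝ) → ℝ) x} with hSdef
  have hSm : MeasurableSet S :=
    measurableSet_lt measurable_const (Lp.stronglyMeasurable (u : Lp ℝ p (volume.restrict Ω))).measurable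
  -- multiplication by the indicator of S
  set P : Lp ℝ p (volume.restrict Ω) → Lp ℝ p (volume.restrict Ω) := fun f => MemLp.toLp (S.indicator f) ((Lp.memLp f).indicator hSm)
    with hPdef
  have hPcoe : ∀ f : Lp ℝ p (volume.restrict Ω), (P f : (Fin N → ℝ) → ℝ) =ᵐ[(volume.restrict Ω)] S.indicator f :=
    fun f => MemLp.coeFn_toLp _
  -- P is 1-Lipschitz
  have hPdist : ∀ f g : Lp ℝ p (volume.restrict Ω), ‖P f - P g‖ ≤ ‖f - g‖ := by
    intro f g
    rw [Lp.norm_def, Lp.norm_def]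
    apply ENNReal.toReal_mono (Lp.eLpNorm_ne_top (f - g))
    apply eLpNorm_mono_ae
    filter_upwards [hPcoe f, hPcoe g, Lp.coeFn_sub (P f) (P g), Lp.coeFn_sub f g]
      with x h1 h2 h3 h4
    rw [h3, Pi.sub_apply, h1, h2, h4, Pi.sub_apply]
    by_cases hx : x ∈ S
    · rw [Set.indicator_of_mem hx, Set.indicator_of_mem hx]
    · rw [Set.indicator_of_notMem hx, Set.indicator_of_notMem hx]
      simp
  -- P (A u) = w
  have hPAu : P (A u) = w := by
    apply Lp.ext
    refine (hPcoe (A u)).trans (EventuallyEq.trans ?_ hw.symm)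
    apply Filter.Eventually.of_forall
    intro x
    simp only [Set.indicator_apply, hSdef, Set.mem_setOf_eq]
  -- P commutes with scalar multiplication
  have hPsmul : ∀ (c : ℝ) (f : Lp ℝ p (volume.restrict Ω)), c • P f = P (c • f) := by
    intro c f
    apply Lp.ext
    filter_upwards [hPcoe f, hPcoe (c • f), Lp.coeFn_smul c (P f), Lp.coeFn_smul c f]
      with x h1 h2 h3 h4
    rw [h3, Pi.smul_apply, h1, h2]
    by_cases hx : x ∈ S
    · rw [Set.indicator_of_mem hx, Set.indicator_of_mem hx, h4, Pi.smul_apply]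
    · rw [Set.indicator_of_notMem hx, Set.indicator_of_notMem hx, smul_zero]
  -- the right-hand side limit
  have hRHS : Tendsto (fun t : ℝ => φ (t⁻¹ • P ((u : Lp ℝ p (volume.restrict Ω)) - T.toFun t u)))
      (nhdsWithin 0 (Ioi 0)) (nhds (φ w)) := by
    have hAu := hgen.1 u
    have h0 : Tendsto (fun t : ℝ => t⁻¹ • P ((u : Lp ℝ p (volume.restrict Ω)) - T.toFun t u))
        (nhdsWithin 0 (Ioi 0)) (nhds w) := by
      rw [tendsto_iff_norm_sub_tendsto_zero]
      apply squeeze_zero (fun t => norm_nonneg _)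
        (g := fun t => ‖t⁻¹ • ((u : Lp ℝ p (volume.restrict Ω)) - T.toFun t u) - A u‖)
      · intro t
        rw [hPsmul, ← hPAu]
        exact hPdist _ _
      · rwa [tendsto_iff_norm_sub_tendsto_zero] at hAu
    exact (φ.continuous.tendsto w).comp h0
  -- orbit of up
  have hupc : ContinuousOn (fun s => T.toFun s up) (Ici 0) := T.strong_cont up
  -- the left-hand side limit
  have hLHS : Tendsto (fun t : ℝ => ψ (t⁻¹ • ∫ s in (0:ℝ)..t, T.toFun s up))
      (nhdsWithin 0 (Ioi 0)) (nhds (ψ up)) := by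
    have h0 : Tendsto (fun t : ℝ => t⁻¹ • ∫ s in (0:ℝ)..t, T.toFun s up)
        (nhdsWithin 0 (Ioi 0)) (nhds up) := by
      have := ftc_right hupc (le_refl (0:ℝ))
      have hf0 : T.toFun 0 up = up := by rw [T.map_zero]; rfl
      rw [hf0] at this
      exact this.congr fun h => by rw [zero_add]
    exact (ψ.continuous.tendsto up).comp h0
  -- φ is monotone
  have hφmono : ∀ a b : Lp ℝ p (volume.restrict Ω), a ≤ b → φ a ≤ φ b := by
    intro a b hab
    have h1 := hφpos (b - a) (sub_nonneg.2 hab)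
    rw [map_sub] at h1
    linarith
  -- the eventual inequality
  have hineq : ∀ᶠ t in nhdsWithin (0:ℝ) (Ioi 0),
      ψ (t⁻¹ • ∫ s in (0:ℝ)..t, T.toFun s up) ≤ φ (t⁻¹ • P ((u : Lp ℝ p (volume.restrict Ω)) - T.toFun t u)) := by
    filter_upwards [self_mem_nhdsWithin] with t ht
    rw [mem_Ioi] at ht
    obtain ⟨hm, hAval⟩ := integral_orbit_mem_domain hgen up ht
    -- the order inequality
    have h1 : (0 : Lp ℝ p (volume.restrict Ω)) ≤ T.toFun t (up - u) := by
      apply hTpos t ht.le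
      rw [sub_nonneg, hupdef]
      exact le_sup_left
    have h2 : (0 : Lp ℝ p (volume.restrict Ω)) ≤ T.toFun t up := by
      apply hTpos t ht.le
      rw [hupdef]
      exact le_sup_right
    have hTsub : T.toFun t (up - (u : Lp ℝ p (volume.restrict Ω))) = T.toFun t up - T.toFun t u := map_sub _ _ _
    rw [hTsub] at h1
    have hord : up - T.toFun t up ≤ P ((u : Lp ℝ p (volume.restrict Ω)) - T.toFun t u) := by
      rw [← Lp.coeFn_le]
      have hc4 : (up : (Fin N → ℝ) → ℝ) =ᵐ[(volume.restrict Ω)] fun x => max (((u : Lp ℝ p (volume.restrict Ω))) x) 0 := by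
        refine (Lp.coeFn_sup _ _).trans ?_
        filter_upwards [Lp.coeFn_zero ℝ p (volume.restrict Ω)] with x hx
        rw [Pi.sup_apply, hx]
        rfl
      filter_upwards [hc4, hPcoe ((u : Lp ℝ p (volume.restrict Ω)) - T.toFun t u),
        Lp.coeFn_sub up (T.toFun t up), Lp.coeFn_sub (u : Lp ℝ p (volume.restrict Ω)) (T.toFun t u),
        Lp.coeFn_sub (T.toFun t up) (T.toFun t u),
        (Lp.coeFn_nonneg _).2 h1, (Lp.coeFn_nonneg _).2 h2]
        with x hc4 hc2 hc1 hc3 hc5 hp1 hp2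
      rw [hc1, Pi.sub_apply, hc4, hc2]
      rw [Pi.sub_apply] at hc5
      rw [Pi.zero_apply] at hp1 hp2
      rw [hc5] at hp1
      by_cases hx : x ∈ S
      · rw [Set.indicator_of_mem hx, hc3, Pi.sub_apply]
        have hxpos : 0 < ((u : Lp ℝ p (volume.restrict Ω)) : (Fin N → ℝ) → ℝ) x := hx
        rw [max_eq_left hxpos.le]
        linarith
      · rw [Set.indicator_of_notMem hx]
        have hxnp : ¬ (0 < ((u : Lp ℝ p (volume.restrict Ω)) : (Fin N → ℝ) → ℝ) x) := hx
        rw [max_eq_right (not_lt.1 hxnp)]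
        linarith
    -- ψ of the average
    have hψ : ψ (∫ s in (0:ℝ)..t, T.toFun s up) = φ (up - T.toFun t up) := by
      rw [← hadj ⟨_, hm⟩, hAval]
    rw [ψ.map_smul, φ.map_smul, smul_eq_mul, smul_eq_mul, hψ]
    apply mul_le_mul_of_nonneg_left _ (inv_nonneg.2 ht.le)
    exact hφmono _ _ hord
  exact le_of_tendsto_of_tendsto hLHS hRHS hineq
end

section
/- Suppose 0 < u ∈ D(A) solves Au = λu − m·g(·,u)·u for some λ ∈ ℝ, where -A generates a positive irreducible holomorphic, ultra-contractive, locally smoothing C₀-semigroup on L^p(Ω), Ω bounded. Then for every ω > -λ₁(A) one has 0 < u ≤ (λ+ω)(ωI + A)^{-1}u, and by iterating, 0 < u ≤ e^{λt} T(t)u for all t > 0; in particular u ∈ L^∞(Ω). -/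
open MeasureTheory Filter Set

open Filter Set

open scoped ENNReal

namespace Stmt15Aux

variable {α : Type*} [MeasurableSpace α] (μ : Measure α) [IsFiniteMeasure μ]
  (p : ℝ≥0∞) [Fact (1 ≤ p)]

theorem lp_integrable (f : Lp ℝ p μ) : Integrable (⇑f) μ :=
  (Lp.memLp f).integrable Fact.out

theorem lp_norm_bound (f : Lp ℝ p μ) (S : Set α) :
    ‖∫ x in S, f x ∂μ‖ ≤ (μ Set.univ ^ (1 / (1:ℝ≥0∞).toReal - 1 / p.toReal)).toReal * ‖f‖ := by
  have hint : Integrable (⇑f) μ := lp_integrable μ p f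
  have h1 : ‖∫ x in S, f x ∂μ‖ ≤ ∫ x in S, ‖f x‖ ∂μ := norm_integral_le_integral_norm _
  have h2 : ∫ x in S, ‖f x‖ ∂μ ≤ ∫ x, ‖f x‖ ∂μ :=
    setIntegral_le_integral hint.norm (Eventually.of_forall fun x => norm_nonneg _)
  have h3 : ∫ x, ‖f x‖ ∂μ = (eLpNorm (⇑f) 1 μ).toReal := by
    rw [integral_norm_eq_lintegral_enorm (Lp.aestronglyMeasurable f),
      eLpNorm_one_eq_lintegral_enorm]
  have hexp : 0 ≤ 1 / (1:ℝ≥0∞).toReal - 1 / p.toReal := by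
    rcases eq_or_ne p ∞ with h | h
    · simp [h]
    · have hp1 : (1:ℝ) ≤ p.toReal := by
        have := (Fact.out : (1:ℝ≥0∞) ≤ p)
        simpa using ENNReal.toReal_mono h this
      have : 1 / p.toReal ≤ 1 := by
        rw [div_le_one (by linarith)]; linarith
      simpa using this
  have hfin : eLpNorm (⇑f) p μ * μ Set.univ ^ (1 / (1:ℝ≥0∞).toReal - 1 / p.toReal) ≠ ∞ :=
    ENNReal.mul_ne_top (Lp.eLpNorm_ne_top f)
      (ENNReal.rpow_ne_top_of_nonneg hexp (measure_ne_top μ _))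
  have h4 : (eLpNorm (⇑f) 1 μ).toReal ≤
      (eLpNorm (⇑f) p μ * μ Set.univ ^ (1 / (1:ℝ≥0∞).toReal - 1 / p.toReal)).toReal :=
    ENNReal.toReal_mono hfin
      (eLpNorm_le_eLpNorm_mul_rpow_measure_univ Fact.out (Lp.aestronglyMeasurable f))
  rw [ENNReal.toReal_mul] at h4
  calc ‖∫ x in S, f x ∂μ‖ ≤ ∫ x, ‖f x‖ ∂μ := h1.trans h2
    _ = (eLpNorm (⇑f) 1 μ).toReal := h3
    _ ≤ (eLpNorm (⇑f) p μ).toReal *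
        (μ Set.univ ^ (1 / (1:ℝ≥0∞).toReal - 1 / p.toReal)).toReal := h4
    _ = (μ Set.univ ^ (1 / (1:ℝ≥0∞).toReal - 1 / p.toReal)).toReal * ‖f‖ := by
        rw [Lp.norm_def]; ring

/-- Integration over a set as a continuous linear functional on `Lp`. -/
noncomputable def setIntCLM (S : Set α) : Lp ℝ p μ →L[ℝ] ℝ :=
  LinearMap.mkContinuous
    { toFun := fun f => ∫ x in S, f x ∂μ
      map_add' := fun f g => by
        have h : (⇑(f + g) : α → ℝ) =ᵐ[μ.restrict S] fun x => f x + g x :=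
          ae_restrict_of_ae (Lp.coeFn_add f g)
        show (∫ x in S, (f + g : Lp ℝ p μ) x ∂μ) = (∫ x in S, f x ∂μ) + ∫ x in S, g x ∂μ
        rw [integral_congr_ae h]
        exact integral_add (lp_integrable μ p f).integrableOn
          (lp_integrable μ p g).integrableOn
      map_smul' := fun c f => by
        have h : (⇑(c • f) : α → ℝ) =ᵐ[μ.restrict S] fun x => c • f x :=
          ae_restrict_of_ae (Lp.coeFn_smul c f)
        show (∫ x in S, (c • f : Lp ℝ p μ) x ∂μ) = c • ∫ x in S, f x ∂μ
        rw [integral_congr_ae h, integral_smul] }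
    ((μ Set.univ ^ (1 / (1:ℝ≥0∞).toReal - 1 / p.toReal)).toReal)
    (fun f => lp_norm_bound μ p f S)

theorem setIntCLM_apply (S : Set α) (f : Lp ℝ p μ) :
    setIntCLM μ p S f = ∫ x in S, f x ∂μ := rfl

theorem setIntCLM_nonneg (S : Set α) (f : Lp ℝ p μ) (hf : 0 ≤ f) :
    0 ≤ setIntCLM μ p S f := by
  rw [setIntCLM_apply]
  have h : 0 ≤ᵐ[μ.restrict S] ⇑f := ae_restrict_of_ae ((Lp.coeFn_nonneg f).mpr hf)
  exact integral_nonneg_of_ae h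

end Stmt15Aux


theorem lp_smul_nonneg {α : Type*} [MeasurableSpace α] {μ : Measure α} {p : ℝ≥0∞}
    {c : ℝ} (hc : 0 ≤ c) (f : Lp ℝ p μ) (hf : 0 ≤ f) : 0 ≤ c • f := by
  refine (MeasureTheory.Lp.coeFn_nonneg _).mp ?_
  filter_upwards [Lp.coeFn_smul c f, (MeasureTheory.Lp.coeFn_nonneg f).mpr hf] with x h1 h2
  have h2' : (0:ℝ) ≤ f x := h2
  show (0:ℝ) ≤ (c • f : Lp ℝ p μ) x
  rw [h1]
  exact smul_nonneg hc h2'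


set_option maxHeartbeats 2000000 in
/-- Regularity of positive solutions of the logistic equation
`Au = λu - m g(·,u) u`: any positive solution satisfies
`0 < u ≤ (λ+ω)(ω+A)⁻¹u` for all `ω > -λ₁(A)`, hence
`0 < u ≤ e^{λ t}T(t)u` for all `t > 0`; in particular `u ∈ L^∞(Ω)`. -/
theorem stmt_15 {N : ℕ} (Ω : Set (Fin N → ℝ)) (hΩo : IsOpen Ω)
    (hΩc : IsConnected Ω) (hΩb : Bornology.IsBounded Ω)
    (p : ℝ≥0∞) [Fact (1 ≤ p)] (hp : p ≠ ∞)
    (T : C0Semigroup (Lp ℝ p (volume.restrict Ω)))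
    (A : Lp ℝ p (volume.restrict Ω) →ₗ.[ℝ] Lp ℝ p (volume.restrict Ω))
    (hgen : IsNegGenerator T A)
    (hTpos : ∀ t : ℝ, 0 ≤ t → ∀ f, 0 ≤ f → 0 ≤ T.toFun t f)
    (hTirr : ∀ f, 0 < f → ∀ φ : Lp ℝ p (volume.restrict Ω) →L[ℝ] ℝ,
      (∀ g, 0 ≤ g → 0 ≤ φ g) → φ ≠ 0 → ∃ t : ℝ, 0 < t ∧ 0 < φ (T.toFun t f))
    (hTholo : ∀ u : Lp ℝ p (volume.restrict Ω),
      AnalyticOn ℝ (fun t : ℝ => T.toFun t u) (Ioi 0))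
    (hultra : ∀ t : ℝ, 0 < t → ∀ u : Lp ℝ p (volume.restrict Ω),
      MemLp (T.toFun t u : (Fin N → ℝ) → ℝ) ∞ (volume.restrict Ω))
    (hsm : ∀ t : ℝ, 0 < t → ∀ u : Lp ℝ p (volume.restrict Ω),
      ∃ g : (Fin N → ℝ) → ℝ, ContinuousOn g Ω ∧
        (T.toFun t u : (Fin N → ℝ) → ℝ) =ᵐ[volume.restrict Ω] g)
    (hpt : ∀ x ∈ Ω, ∃ (w : Lp ℝ p (volume.restrict Ω)) (s : ℝ)
      (g : (Fin N → ℝ) → ℝ), 0 < s ∧ ContinuousOn g Ω ∧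
        (T.toFun s w : (Fin N → ℝ) → ℝ) =ᵐ[volume.restrict Ω] g ∧ g x ≠ 0)
    -- the principal eigenvalue λ₁(A), characterised by its positive eigenvector
    (lam1 : ℝ) (u₁ : Lp ℝ p (volume.restrict Ω)) (hu₁ : 0 < u₁)
    (hu₁mem : u₁ ∈ A.domain) (heig₁ : A ⟨u₁, hu₁mem⟩ = lam1 • u₁)
    -- the data of the logistic nonlinearity
    (m : (Fin N → ℝ) → ℝ) (hm0 : ∀ x, 0 ≤ m x) (hmbd : ∃ C : ℝ, ∀ x, |m x| ≤ C)
    (g : (Fin N → ℝ) → ℝ → ℝ)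
    (hgc : Continuous fun q : (Fin N → ℝ) × ℝ => g q.1 q.2)
    (hg0 : ∀ x, g x 0 = 0)
    (hgmono : ∀ x, MonotoneOn (g x) (Ici (0 : ℝ)))
    (hgnonneg : ∀ x, ∀ ξ : ℝ, 0 ≤ ξ → 0 ≤ g x ξ)
    -- a positive solution u of Au = λu - m g(·,u) u
    (lam : ℝ) (u : Lp ℝ p (volume.restrict Ω)) (hu : 0 < u)
    (humem : u ∈ A.domain)
    (z : Lp ℝ p (volume.restrict Ω))
    (hz : (z : (Fin N → ℝ) → ℝ) =ᵐ[volume.restrict Ω] fun x =>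
      m x * g x ((u : (Fin N → ℝ) → ℝ) x) * (u : (Fin N → ℝ) → ℝ) x)
    (heq : A ⟨u, humem⟩ = lam • u - z) :
    (∀ ω : ℝ, -lam1 < ω →
      ∀ R : Lp ℝ p (volume.restrict Ω) →L[ℝ] Lp ℝ p (volume.restrict Ω),
        IsResolventOf A ω R → (∀ f, 0 ≤ f → 0 ≤ R f) →
          u ≤ (lam + ω) • R u) ∧
    (∀ t : ℝ, 0 < t → u ≤ Real.exp (lam * t) • T.toFun t u) ∧
    MemLp (u : (Fin N → ℝ) → ℝ) ∞ (volume.restrict Ω) := by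
  classical
  haveI : IsFiniteMeasure (volume.restrict Ω) :=
    ⟨by rw [Measure.restrict_apply_univ]; exact hΩb.measure_lt_top⟩
  have hua : 0 ≤ᵐ[volume.restrict Ω] ⇑u := (Lp.coeFn_nonneg u).mpr hu.le
  have hz0 : (0 : Lp ℝ p (volume.restrict Ω)) ≤ z := by
    refine (Lp.coeFn_nonneg z).mp ?_
    filter_upwards [hz, hua] with x hzx hux
    have hux' : (0:ℝ) ≤ u x := hux
    show (0:ℝ) ≤ z x
    rw [hzx]
    exact mul_nonneg (mul_nonneg (hm0 x) (hgnonneg x _ hux')) hux'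
  -- derivative of the orbit map
  have hv_deriv : ∀ s : ℝ, 0 < s →
      HasDerivAt (fun r : ℝ => T.toFun r u) (-(T.toFun s (lam • u - z))) s := by
    intro s hs
    have hd : DifferentiableAt ℝ (fun r : ℝ => T.toFun r u) s :=
      ((hTholo u s hs).differentiableWithinAt).differentiableAt (Filter.mem_of_superset (Ioi_mem_nhds hs) (subset_insert _ _))
    have hD := hd.hasDerivAt
    have hgen1 := hgen.1 ⟨u, humem⟩
    rw [heq] at hgen1
    have h3 := ((T.toFun s).continuous.tendsto _).comp hgen1
    have h4 : Tendsto (fun t : ℝ => t⁻¹ • (T.toFun (s + t) u - T.toFun s u))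
        (nhdsWithin 0 (Ioi 0)) (nhds (-(T.toFun s (lam • u - z)))) := by
      have h5 : Tendsto (fun t : ℝ => -(t⁻¹ • (T.toFun (s + t) u - T.toFun s u)))
          (nhdsWithin 0 (Ioi 0)) (nhds (T.toFun s (lam • u - z))) := by
        refine Tendsto.congr' ?_ h3
        filter_upwards [self_mem_nhdsWithin] with t ht
        have hco : T.toFun s (T.toFun t u) = T.toFun (s + t) u := by
          rw [T.map_add s t hs.le (le_of_lt ht)]; rfl
        show T.toFun s (t⁻¹ • (u - T.toFun t u)) = _
        rw [ContinuousLinearMap.map_smul, map_sub, hco, ← smul_neg, neg_sub]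
      simpa only [neg_neg] using h5.neg
    have h6 : Tendsto (fun t : ℝ => t⁻¹ • (T.toFun (s + t) u - T.toFun s u))
        (nhdsWithin 0 (Ioi 0)) (nhds (deriv (fun r : ℝ => T.toFun r u) s)) :=
      (hasDerivAt_iff_tendsto_slope_zero.mp hD).mono_left
        (nhdsWithin_mono 0 fun x hx => Set.mem_compl_singleton_iff.mpr (ne_of_gt hx))
    have huniq := tendsto_nhds_unique h6 h4
    rwa [huniq] at hD
  -- derivative of s ↦ e^{λ s} T(s) u
  have hF_deriv : ∀ s : ℝ, 0 < s →
      HasDerivAt (fun r : ℝ => Real.exp (lam * r) • T.toFun r u)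
        (Real.exp (lam * s) • T.toFun s z) s := by
    intro s hs
    have h1 : HasDerivAt (fun r : ℝ => lam * r) lam s := by
      simpa using (hasDerivAt_id s).const_mul lam
    have he : HasDerivAt (fun r : ℝ => Real.exp (lam * r)) (lam * Real.exp (lam * s)) s := by
      exact ((Real.hasDerivAt_exp (lam * s)).comp s h1).congr_deriv (mul_comm _ _)
    have hsm := he.smul (hv_deriv s hs)
    refine hsm.congr_deriv ?_
    have hTz : T.toFun s (lam • u - z) = lam • T.toFun s u - T.toFun s z := by
      rw [map_sub, ContinuousLinearMap.map_smul]
    rw [hTz]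
    module
  -- Part 2 : u ≤ e^{λ t} T(t) u for all t > 0
  have part2 : ∀ t : ℝ, 0 < t → u ≤ Real.exp (lam * t) • T.toFun t u := by
    intro t ht
    have hsub : (0 : Lp ℝ p (volume.restrict Ω)) ≤ Real.exp (lam * t) • T.toFun t u - u := by
      refine (Lp.coeFn_nonneg _).mp ?_
      refine ae_nonneg_of_forall_setIntegral_nonneg
        (Stmt15Aux.lp_integrable (volume.restrict Ω) p (Real.exp (lam * t) • T.toFun t u - u)) ?_
      intro S hS _
      set φ := Stmt15Aux.setIntCLM (volume.restrict Ω) p S with hφ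
      have hcont : ContinuousOn (fun s : ℝ => φ (Real.exp (lam * s) • T.toFun s u))
          (Icc 0 t) := by
        apply φ.continuous.comp_continuousOn
        exact ((Real.continuous_exp.comp (continuous_const.mul continuous_id)).continuousOn).smul
          ((T.strong_cont u).mono Icc_subset_Ici_self)
      have hder : ∀ s ∈ Ioo (0:ℝ) t,
          HasDerivAt (fun s : ℝ => φ (Real.exp (lam * s) • T.toFun s u))
            (φ (Real.exp (lam * s) • T.toFun s z)) s := by
        intro s hs
        have := φ.hasFDerivAt.comp_hasDerivAt s (hF_deriv s hs.1)
        simpa only [Function.comp_def] using this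
      have hmono : MonotoneOn (fun s : ℝ => φ (Real.exp (lam * s) • T.toFun s u)) (Icc 0 t) := by
        apply monotoneOn_of_deriv_nonneg (convex_Icc 0 t) hcont
        · intro s hs
          rw [interior_Icc] at hs
          exact ((hder s hs).differentiableAt).differentiableWithinAt
        · intro s hs
          rw [interior_Icc] at hs
          rw [(hder s hs).deriv]
          have hTz0 : (0 : Lp ℝ p (volume.restrict Ω)) ≤ T.toFun s z := hTpos s hs.1.le z hz0
          exact Stmt15Aux.setIntCLM_nonneg (volume.restrict Ω) p S _
            (lp_smul_nonneg (Real.exp_pos _).le _ hTz0)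
      have h0t : φ (Real.exp (lam * 0) • T.toFun 0 u) ≤
          φ (Real.exp (lam * t) • T.toFun t u) :=
        hmono (left_mem_Icc.mpr ht.le) (right_mem_Icc.mpr ht.le) ht.le
      have hF0 : Real.exp (lam * 0) • T.toFun 0 u = u := by
        rw [mul_zero, Real.exp_zero, one_smul, T.map_zero]; rfl
      rw [hF0] at h0t
      have hisub : (∫ x in S, (Real.exp (lam * t) • T.toFun t u - u : Lp ℝ p (volume.restrict Ω)) x ∂(volume.restrict Ω))
          = φ (Real.exp (lam * t) • T.toFun t u) - φ u := by
        have hcongr : (⇑(Real.exp (lam * t) • T.toFun t u - u : Lp ℝ p (volume.restrict Ω)) : _ → ℝ)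
            =ᵐ[(volume.restrict Ω).restrict S] fun x => (Real.exp (lam * t) • T.toFun t u : Lp ℝ p (volume.restrict Ω)) x - u x :=
          ae_restrict_of_ae (Lp.coeFn_sub _ _)
        rw [integral_congr_ae hcongr,
          integral_sub (Stmt15Aux.lp_integrable (volume.restrict Ω) p _).integrableOn
            (Stmt15Aux.lp_integrable (volume.restrict Ω) p u).integrableOn]
        rfl
      rw [hisub]
      linarith
    exact sub_nonneg.mp hsub
  refine ⟨?_, part2, ?_⟩
  · -- Part 1 : resolvent inequality
    intro ω hω R hR hRpos
    have h0 := hR.left_inv ⟨u, humem⟩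
    rw [heq] at h0
    have hx : ω • u + (lam • u - z) = (lam + ω) • u - z := by
      rw [add_smul]; abel
    have h1 : R ((lam + ω) • u - z) = u := by rw [← hx]; exact h0
    rw [map_sub, ContinuousLinearMap.map_smul] at h1
    have hRz : (0 : Lp ℝ p (volume.restrict Ω)) ≤ R z := hRpos z hz0
    have hfin : u ≤ u + R z := le_add_of_nonneg_right hRz
    have heqn : u + R z = (lam + ω) • R u := by
      conv_lhs => rw [← h1]
      abel
    rwa [heqn] at hfin
  · -- Part 3 : u ∈ L^∞
    have hmem := hultra 1 one_pos u
    have hw : MemLp (⇑(Real.exp (lam * 1) • T.toFun 1 u : Lp ℝ p (volume.restrict Ω)) : _ → ℝ) ∞ (volume.restrict Ω) :=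
      (hmem.const_smul (Real.exp (lam * 1))).ae_eq (Lp.coeFn_smul _ _).symm
    have hle : ⇑u ≤ᵐ[volume.restrict Ω] ⇑(Real.exp (lam * 1) • T.toFun 1 u : Lp ℝ p (volume.restrict Ω)) :=
      (Lp.coeFn_le _ _).mpr (part2 1 one_pos)
    refine hw.of_le (Lp.aestronglyMeasurable u) ?_
    filter_upwards [hle, hua] with x h1 h2
    have h2' : (0:ℝ) ≤ u x := h2
    rw [Real.norm_eq_abs, abs_of_nonneg h2']
    exact le_trans h1 (le_abs_self _)
end
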